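/- Let q be a prime power and n a positive integer. Let P(X_1, ..., X_n) be a nonzero polynomial over F_q with deg_{X_i} P < q-1 for i = 1, ..., n, and let m be the number of x in (F_q^*)^n with P(x) ≠ 0. Then there does not exist any (k_1, ..., k_n) in {0, 1, ..., q-2}^n such that the support of the reduction of X_1^{k_1} ··· X_n^{k_n} P(X_1, ..., X_n) modulo {X_1^{q-1} - 1, ..., X_n^{q-1} - 1} is disjoint from U(q, m, n); equivalently, for every such (k_1, ..., k_n), this support contains at least one monomial of U(q, m, n). -/

import Mathlib

open MvPolynomial Finset

private lemma pow_mod_eq_pow {F : Type*} [Field F] {a : F} {t : ℕ} (h : a ^ t = 1) (e : ℕ) :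
    a ^ (e % t) = a ^ e := by
  conv_rhs => rw [← Nat.div_add_mod e t]
  rw [pow_add, pow_mul, h, one_pow, one_mul]

private lemma key_count {F : Type*} [Field F] [Fintype F] [DecidableEq F] {q : ℕ}
    (hq : Fintype.card F = q) :
    ∀ (n : ℕ) (Q : MvPolynomial (Fin n) F), Q ≠ 0 → (∀ i, Q.degreeOf i < q - 1) →
    ∃ e ∈ Q.support, ∏ i, (q - 1 - e i) ≤
      (Finset.univ.filter fun x : Fin n → F =>
        (∀ i, x i ≠ 0) ∧ MvPolynomial.eval x Q ≠ 0).card := by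
  intro n
  induction n with
  | zero =>
    intro Q hQ hdeg
    obtain ⟨c, rfl⟩ := MvPolynomial.C_surjective (Fin 0) Q
    have hc : c ≠ 0 := fun h => hQ (by simp [h])
    refine ⟨0, ?_, ?_⟩
    · simp [mem_support_iff, hc]
    · have hmem : (fun i : Fin 0 => (0 : F)) ∈ Finset.univ.filter fun x : Fin 0 → F =>
          (∀ i, x i ≠ 0) ∧ MvPolynomial.eval x (C c) ≠ 0 :=
        Finset.mem_filter.2 ⟨Finset.mem_univ _, fun i => i.elim0, by simp [hc]⟩
      simpa using Finset.card_pos.2 ⟨_, hmem⟩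
  | succ n ih =>
    intro Q hQ hdeg
    set p := finSuccEquiv F n Q with hp
    have hpne : p ≠ 0 := fun h => hQ ((finSuccEquiv F n).injective (by simp [← hp, h]))
    set d := p.natDegree with hd
    have hdeg0 : d = Q.degreeOf 0 := natDegree_finSuccEquiv Q
    have hdlt : d < q - 1 := hdeg0 ▸ hdeg 0
    have hQd : p.coeff d ≠ 0 := Polynomial.leadingCoeff_ne_zero.2 hpne
    have hdegd : ∀ i, (p.coeff d).degreeOf i < q - 1 :=
      fun i => lt_of_le_of_lt (degreeOf_coeff_finSuccEquiv Q i d) (hdeg i.succ)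
    obtain ⟨f, hfmem, hfle⟩ := ih (p.coeff d) hQd hdegd
    refine ⟨f.cons d, ?_, ?_⟩
    · rw [mem_support_iff, ← finSuccEquiv_coeff_coeff]
      exact mem_support_iff.1 hfmem
    set T' := Finset.univ.filter fun y : Fin n → F =>
        (∀ i, y i ≠ 0) ∧ MvPolynomial.eval y (p.coeff d) ≠ 0 with hT'
    set T := Finset.univ.filter fun x : Fin (n+1) → F =>
        (∀ i, x i ≠ 0) ∧ MvPolynomial.eval x Q ≠ 0 with hT
    set g : (Fin n → F) → Finset (Fin (n+1) → F) := fun y =>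
      (Finset.univ.filter fun a : F =>
        a ≠ 0 ∧ Polynomial.eval a (p.map (MvPolynomial.eval y)) ≠ 0).image
        (fun a => (Fin.cons a y : Fin (n+1) → F)) with hg
    have hginj : ∀ y : Fin n → F, Function.Injective (fun a : F => (Fin.cons a y : Fin (n+1) → F)) := by
      intro y a b h
      simpa using congrFun h 0
    have hcard : ∀ y ∈ T', q - 1 - d ≤ (g y).card := by
      intro y hy
      rw [hg, Finset.card_image_of_injective _ (hginj y)]
      obtain ⟨hy0, hyd⟩ := (Finset.mem_filter.1 hy).2
      set u := p.map (MvPolynomial.eval y) with hu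
      have hud : u.coeff d ≠ 0 := by rwa [hu, Polynomial.coeff_map]
      have hune : u ≠ 0 := fun h => hud (by simp [h])
      have hund : u.natDegree ≤ d := Polynomial.natDegree_map_le
      have h1 : (Finset.univ.filter fun a : F => a ≠ 0) =
          Finset.univ.erase (0 : F) := by
        ext a; simp [Finset.mem_erase, and_comm]
      have h2 : (Finset.univ.filter fun a : F => a ≠ 0).card = q - 1 := by
        rw [h1, Finset.card_erase_of_mem (Finset.mem_univ _), Finset.card_univ, hq]
      have hsplit := Finset.card_filter_add_card_filter_not
        (s := Finset.univ.filter fun a : F => a ≠ 0)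
        (p := fun a => Polynomial.eval a u ≠ 0)
      have hroots : ((Finset.univ.filter fun a : F => a ≠ 0).filter
          fun a => ¬ Polynomial.eval a u ≠ 0).card ≤ d := by
        refine le_trans (Finset.card_le_card ?_)
          (le_trans u.roots.toFinset_card_le (le_trans u.card_roots' hund))
        intro a ha
        simp only [Finset.mem_filter, not_not] at ha
        rw [Multiset.mem_toFinset, Polynomial.mem_roots hune]
        exact ha.2
      have : (Finset.univ.filter fun a : F =>
          a ≠ 0 ∧ Polynomial.eval a (p.map (MvPolynomial.eval y)) ≠ 0) =
          (Finset.univ.filter fun a : F => a ≠ 0).filter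
            fun a => Polynomial.eval a u ≠ 0 := by
        rw [Finset.filter_filter]
      rw [this]
      omega
    have hdisj : (↑T' : Set (Fin n → F)).PairwiseDisjoint g := by
      intro y hy y' hy' hne
      refine Finset.disjoint_left.2 fun z hz hz' => hne ?_
      rw [hg] at hz hz'
      obtain ⟨a, _, rfl⟩ := Finset.mem_image.1 hz
      obtain ⟨a', _, hzz⟩ := Finset.mem_image.1 hz'
      have h1 := congrArg Fin.tail hzz
      simpa [Fin.tail_cons] using h1.symm
    have hsub : T'.biUnion g ⊆ T := by
      intro z hz
      obtain ⟨y, hy, hzy⟩ := Finset.mem_biUnion.1 hz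
      rw [hg] at hzy
      obtain ⟨a, ha, rfl⟩ := Finset.mem_image.1 hzy
      obtain ⟨ha0, hae⟩ := (Finset.mem_filter.1 ha).2
      obtain ⟨hy0, _⟩ := (Finset.mem_filter.1 hy).2
      refine Finset.mem_filter.2 ⟨Finset.mem_univ _, ?_, ?_⟩
      · intro i
        refine Fin.cases ?_ ?_ i
        · simpa using ha0
        · intro j; simpa using hy0 j
      · rw [eval_eq_eval_mv_eval']
        exact hae
    have hTcard : T'.card * (q - 1 - d) ≤ T.card := by
      calc T'.card * (q - 1 - d) = ∑ _y ∈ T', (q - 1 - d) := by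
            rw [Finset.sum_const, smul_eq_mul]
        _ ≤ ∑ y ∈ T', (g y).card := Finset.sum_le_sum hcard
        _ = (T'.biUnion g).card := (Finset.card_biUnion hdisj).symm
        _ ≤ T.card := Finset.card_le_card hsub
    calc ∏ i : Fin (n+1), (q - 1 - (f.cons d) i)
        = (q - 1 - d) * ∏ i : Fin n, (q - 1 - f i) := by
          rw [Fin.prod_univ_succ]
          simp [Finsupp.cons_zero, Finsupp.cons_succ]
      _ ≤ (q - 1 - d) * T'.card := Nat.mul_le_mul_left _ hfle
      _ = T'.card * (q - 1 - d) := Nat.mul_comm _ _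
      _ ≤ T.card := hTcard


/-- Reduction of an exponent vector modulo `q-1` in each coordinate. -/
noncomputable def reduceExp (q : ℕ) {n : ℕ} (e : Fin n →₀ ℕ) : Fin n →₀ ℕ :=
  Finsupp.mapRange (· % (q - 1)) (Nat.zero_mod _) e

/-- Reduction of a polynomial modulo `{X_1^{q-1} - 1, …, X_n^{q-1} - 1}`: each exponent of
each variable is replaced by its residue modulo `q-1`. -/
noncomputable def reduceMod {F : Type*} [Field F] (q : ℕ) {n : ℕ}
    (Q : MvPolynomial (Fin n) F) : MvPolynomial (Fin n) F :=
  Q.support.sum fun e => MvPolynomial.monomial (reduceExp q e) (Q.coeff e)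

/-- The exponent vector `e` belongs to the set `U(q,m,n)`, i.e. the monomial
`X_1^{e_1} ⋯ X_n^{e_n}` lies in `M(q,n)` and `∏_{s=1}^n (q-1-e_s) ≤ m`. -/
def inU (q m : ℕ) {n : ℕ} (e : Fin n →₀ ℕ) : Prop :=
  (∀ i, e i < q - 1) ∧ ∏ s : Fin n, (q - 1 - e s) ≤ m

/-- **Theorem 3.** Let `P ∈ F_q[X_1,…,X_n]` be nonzero with `deg_{X_i} P < q-1` for all `i`,
and let `m` be the number of `x ∈ (F_q^*)^n` with `P(x) ≠ 0`. Then there is no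
`(k_1,…,k_n) ∈ {0,…,q-2}^n` such that the support of
`X_1^{k_1} ⋯ X_n^{k_n} P mod {X_1^{q-1}-1, …, X_n^{q-1}-1}` is disjoint from `U(q,m,n)`. -/
theorem support_of_shift_meets_U
    {F : Type*} [Field F] [Fintype F] {q n : ℕ} (hq : Fintype.card F = q) (hn : 0 < n)
    (P : MvPolynomial (Fin n) F) (hP : P ≠ 0)
    (hdeg : ∀ i, P.degreeOf i < q - 1)
    (m : ℕ)
    (hm : m = Nat.card {x : Fin n → F | (∀ i, x i ≠ 0) ∧ MvPolynomial.eval x P ≠ 0}) :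
    ¬ ∃ k : Fin n →₀ ℕ, (∀ i, k i ≤ q - 2) ∧
      ∀ e ∈ (reduceMod q (MvPolynomial.monomial k (1 : F) * P)).support, ¬ inU q m e := by
  classical
  have hq2 : 2 ≤ q := by rw [← hq]; exact Fintype.one_lt_card
  have hq1 : 0 < q - 1 := Nat.sub_pos_of_lt hq2
  have hcard : ∀ R : MvPolynomial (Fin n) F,
      Nat.card {x : Fin n → F | (∀ i, x i ≠ 0) ∧ MvPolynomial.eval x R ≠ 0} =
      (Finset.univ.filter fun x : Fin n → F =>
        (∀ i, x i ≠ 0) ∧ MvPolynomial.eval x R ≠ 0).card := by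
    intro R
    rw [Nat.card_coe_set_eq, Set.ncard_eq_toFinset_card', Set.toFinset_setOf]
  rintro ⟨k, hk, hdisj⟩
  obtain ⟨e₀, he₀, hle₀⟩ := key_count hq n P hP hdeg
  have hposP : 0 < (Finset.univ.filter fun x : Fin n → F =>
      (∀ i, x i ≠ 0) ∧ MvPolynomial.eval x P ≠ 0).card := by
    refine lt_of_lt_of_le (Finset.prod_pos fun i _ => ?_) hle₀
    exact Nat.sub_pos_of_lt ((degreeOf_lt_iff hq1).1 (hdeg i) e₀ he₀)
  obtain ⟨x₀, hx₀⟩ := Finset.card_pos.1 hposP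
  obtain ⟨hx₀0, hx₀P⟩ := (Finset.mem_filter.1 hx₀).2
  set Q₀ := MvPolynomial.monomial k (1 : F) * P with hQ₀
  have hpow : ∀ (x : Fin n → F), (∀ i, x i ≠ 0) → ∀ (i : Fin n) (e : ℕ),
      x i ^ (e % (q - 1)) = x i ^ e := by
    intro x hx i e
    refine pow_mod_eq_pow ?_ e
    rw [← hq]
    exact FiniteField.pow_card_sub_one_eq_one _ (hx i)
  have heval : ∀ x : Fin n → F, (∀ i, x i ≠ 0) →
      MvPolynomial.eval x (reduceMod q Q₀) = MvPolynomial.eval x Q₀ := by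
    intro x hx
    rw [reduceMod, map_sum, eval_eq' x Q₀]
    refine Finset.sum_congr rfl fun e _ => ?_
    rw [eval_monomial]
    congr 1
    rw [Finsupp.prod_fintype _ _ fun i => pow_zero _]
    refine Finset.prod_congr rfl fun i _ => ?_
    rw [reduceExp, Finsupp.mapRange_apply]
    exact hpow x hx i (e i)
  have hQ0 : ∀ x : Fin n → F, (∀ i, x i ≠ 0) →
      (MvPolynomial.eval x Q₀ ≠ 0 ↔ MvPolynomial.eval x P ≠ 0) := by
    intro x hx
    have hne : (k.prod fun i e => x i ^ e) ≠ 0 := by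
      rw [Finsupp.prod]
      exact Finset.prod_ne_zero_iff.2 fun i _ => pow_ne_zero _ (hx i)
    rw [hQ₀, map_mul, eval_monomial, one_mul, mul_ne_zero_iff]
    tauto
  have hsetEq : (Finset.univ.filter fun x : Fin n → F =>
      (∀ i, x i ≠ 0) ∧ MvPolynomial.eval x (reduceMod q Q₀) ≠ 0) =
      (Finset.univ.filter fun x : Fin n → F =>
      (∀ i, x i ≠ 0) ∧ MvPolynomial.eval x P ≠ 0) := by
    refine Finset.filter_congr fun x _ => ?_
    refine and_congr_right fun hx => ?_
    rw [heval x hx]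
    exact hQ0 x hx
  have hQne : reduceMod q Q₀ ≠ 0 := by
    intro h
    have h1 : MvPolynomial.eval x₀ (reduceMod q Q₀) ≠ 0 := by
      rw [heval x₀ hx₀0]
      exact (hQ0 x₀ hx₀0).2 hx₀P
    rw [h, map_zero] at h1
    exact h1 rfl
  have hdegQ : ∀ i, (reduceMod q Q₀).degreeOf i < q - 1 := by
    intro i
    rw [degreeOf_lt_iff hq1]
    intro e he
    rw [mem_support_iff, reduceMod, coeff_sum] at he
    obtain ⟨e', _, hne'⟩ := Finset.exists_ne_zero_of_sum_ne_zero he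
    have hee : reduceExp q e' = e := by
      by_contra hc
      rw [coeff_monomial, if_neg hc] at hne'
      exact hne' rfl
    rw [← hee, reduceExp, Finsupp.mapRange_apply]
    exact Nat.mod_lt _ hq1
  obtain ⟨e, he, hle⟩ := key_count hq n (reduceMod q Q₀) hQne hdegQ
  refine hdisj e he ⟨fun i => (degreeOf_lt_iff hq1).1 (hdegQ i) e he, ?_⟩
  rw [hm, hcard P]
  rwa [hsetEq] at hle
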